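/- For each i with 2 ≤ i ≤ m, there exist constants C_i, D_i > 0 such that for all r ∈ ℤ with r ≠ 0: C_i |r|^{i-1} ≤ |φ^r(a_i)|_F ≤ D_i |r|^{i-1}. -/

import Mathlib

open FreeGroup SemidirectProduct

/-- Words on the letters `a₁^{±1}, …, a_m^{±1}` (`(i, true)` is `a_{i+1}`,
`(i, false)` is `a_{i+1}⁻¹`, with 0-based `Fin`-indexing of the generators). -/
abbrev FWord (m : ℕ) := List (Fin m × Bool)

/-- A word is freely reduced. -/
def Reduced {m : ℕ} (w : FWord m) : Prop := FreeGroup.reduce w = w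

/-- `φ` is the automorphism of `F = F(a₁, …, a_m)` with `φ(a₁) = a₁` and
`φ(aᵢ) = aᵢ aᵢ₋₁` for `2 ≤ i ≤ m`. -/
def IsHydraAut (m : ℕ) (φ : FreeGroup (Fin m) ≃* FreeGroup (Fin m)) : Prop :=
  ∀ i : Fin m, φ (FreeGroup.of i) =
    if i.val = 0 then FreeGroup.of i
    else FreeGroup.of i *
      FreeGroup.of (⟨i.val - 1, Nat.lt_of_le_of_lt (Nat.sub_le _ _) i.isLt⟩ : Fin m)

/-- The free-by-cyclic group `H_m = F ⋊_φ ℤ`; here `s = inr (ofAdd 1)` and the defining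
relation `s⁻¹ aᵢ s = φ(aᵢ)` holds.  The normal form `ũ s^p` is the element
`⟨ũ, Multiplicative.ofAdd p⟩`. -/
abbrev Hgrp (m : ℕ) (φ : FreeGroup (Fin m) ≃* FreeGroup (Fin m)) :=
  FreeGroup (Fin m) ⋊[zpowersHom (MulAut (FreeGroup (Fin m))) φ⁻¹] Multiplicative ℤ

/-- Letters of words over the generators of `H_m`: `some i` is `a_{i+1}`, `none` is `s`. -/
abbrev HWord (m : ℕ) := List (Option (Fin m) × Bool)

def hLetter {m : ℕ} (φ : FreeGroup (Fin m) ≃* FreeGroup (Fin m)) (x : Option (Fin m) × Bool) :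
    Hgrp m φ :=
  match x.1 with
  | some i => cond x.2 (SemidirectProduct.inl (FreeGroup.of i))
      (SemidirectProduct.inl (FreeGroup.of i))⁻¹
  | none => cond x.2 (SemidirectProduct.inr (Multiplicative.ofAdd (1:ℤ)))
      (SemidirectProduct.inr (Multiplicative.ofAdd (1:ℤ)))⁻¹

/-- The element of `H_m` represented by a word on `a₁^{±1}, …, a_m^{±1}, s^{±1}`. -/
def evalH {m : ℕ} (φ : FreeGroup (Fin m) ≃* FreeGroup (Fin m)) (w : HWord m) : Hgrp m φ :=
  (w.map (hLetter φ)).prod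

/-- Word length in `H_m` w.r.t. the generating set `{a₁, …, a_m, s}`. -/
noncomputable def lenH {m : ℕ} (φ : FreeGroup (Fin m) ≃* FreeGroup (Fin m)) (g : Hgrp m φ) : ℕ :=
  sInf {n | ∃ w : HWord m, evalH φ w = g ∧ w.length = n}

/-- Word length in `F` w.r.t. the generating set `{a₁, …, a_m}`. -/
noncomputable def lenF {m : ℕ} (g : FreeGroup (Fin m)) : ℕ :=
  sInf {n | ∃ w : FWord m, FreeGroup.mk w = g ∧ w.length = n}

/-- The rank of a word: the maximal `i` such that `aᵢ^{±1}` occurs in it (a letter with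
`Fin`-index `j` is `a_{j+1}`, so it contributes `j+1`); the empty word has rank `0`. -/
def wrank {m : ℕ} (w : FWord m) : ℕ := (w.map (fun x => x.1.val + 1)).foldr max 0

/-- The four types of rank-`i` pieces: `aᵢ u`, `u aᵢ⁻¹`, `aᵢ u aᵢ⁻¹`, `u`. -/
inductive PieceType | head | tail | both | plain
deriving DecidableEq

/-- `π` is a rank-`i` piece of the given type: `aᵢ u`, `u aᵢ⁻¹`, `aᵢ u aᵢ⁻¹` or `u`,
where `u` is a (possibly empty) word of rank at most `i - 1`.  Pieces of the first three
types have strict rank `i`. -/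
def IsPieceType {m : ℕ} (i : ℕ) (t : PieceType) (π : FWord m) : Prop :=
  match t with
  | .head => ∃ (x : Fin m × Bool) (u : FWord m),
      π = x :: u ∧ x.1.val + 1 = i ∧ x.2 = true ∧ wrank u < i
  | .tail => ∃ (x : Fin m × Bool) (u : FWord m),
      π = u ++ [x] ∧ x.1.val + 1 = i ∧ x.2 = false ∧ wrank u < i
  | .both => ∃ (j : Fin m) (u : FWord m),
      π = (j, true) :: (u ++ [(j, false)]) ∧ j.val + 1 = i ∧ wrank u < i
  | .plain => wrank π < i

def IsPiece {m : ℕ} (i : ℕ) (π : FWord m) : Prop := ∃ t, IsPieceType i t π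

/-- The rank-`i` piece decomposition of `w`: a decomposition into rank-`i` pieces
with the minimal possible number of pieces. -/
def IsPieceDecomp {m : ℕ} (i : ℕ) (w : FWord m) (L : List (FWord m)) : Prop :=
  L.flatten = w ∧ (∀ π ∈ L, IsPiece i π) ∧
    ∀ L' : List (FWord m), L'.flatten = w → (∀ π ∈ L', IsPiece i π) → L.length ≤ L'.length

/-- The number of pieces in the rank-`i` decomposition of `w`, for `i = wrank w`. -/
noncomputable def piecesCount {m : ℕ} (w : FWord m) : ℕ :=
  sInf {p | ∃ L : List (FWord m),
    L.flatten = w ∧ (∀ π ∈ L, IsPiece (wrank w) π) ∧ L.length = p}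

/-- The number of pieces of an element of the free group. -/
noncomputable def piecesCountF {m : ℕ} (g : FreeGroup (Fin m)) : ℕ :=
  piecesCount (FreeGroup.toWord g)

namespace Hydra7
variable {m : ℕ} (φ : FreeGroup (Fin m) ≃* FreeGroup (Fin m))

lemma lenF_le {g : FreeGroup (Fin m)} {w : FWord m} (hw : FreeGroup.mk w = g) :
    lenF g ≤ w.length := Nat.sInf_le ⟨w, hw, rfl⟩

lemma lenF_spec (g : FreeGroup (Fin m)) :
    ∃ w : FWord m, FreeGroup.mk w = g ∧ w.length = lenF g :=
  Nat.sInf_mem (⟨g.toWord.length, g.toWord, g.mk_toWord, rfl⟩ :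
    Set.Nonempty {n | ∃ w : FWord m, FreeGroup.mk w = g ∧ w.length = n})

lemma one_le_lenF {g : FreeGroup (Fin m)} (hg : g ≠ 1) : 1 ≤ lenF g := by
  obtain ⟨w, hw, hl⟩ := lenF_spec g
  rcases w with _ | ⟨x, w⟩
  · exact absurd (hw ▸ FreeGroup.one_eq_mk.symm) hg
  · simp only [List.length_cons] at hl; omega

lemma lenF_mul (g h : FreeGroup (Fin m)) : lenF (g * h) ≤ lenF g + lenF h := by
  obtain ⟨w1, hw1, hl1⟩ := lenF_spec g
  obtain ⟨w2, hw2, hl2⟩ := lenF_spec h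
  have : FreeGroup.mk (w1 ++ w2) = g * h := by rw [← FreeGroup.mul_mk, hw1, hw2]
  have := lenF_le this
  simpa [hl1, hl2] using this

lemma lenF_inv (g : FreeGroup (Fin m)) : lenF g⁻¹ ≤ lenF g := by
  obtain ⟨w, hw, hl⟩ := lenF_spec g
  have : FreeGroup.mk (FreeGroup.invRev w) = g⁻¹ := by rw [← FreeGroup.inv_mk, hw]
  have := lenF_le this
  simpa [FreeGroup.invRev_length, hl] using this

lemma lenF_of (j : Fin m) : lenF (FreeGroup.of j) ≤ 1 :=
  lenF_le (w := [(j, true)]) rfl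


def χ (m : ℕ) : FreeGroup (Fin m) →* Multiplicative ℤ :=
  FreeGroup.lift fun j => Multiplicative.ofAdd (if j.val = 0 then (1:ℤ) else 0)

def cc (g : FreeGroup (Fin m)) : ℤ := Multiplicative.toAdd (χ m g)

lemma cc_mul (g h : FreeGroup (Fin m)) : cc (g * h) = cc g + cc h := by
  simp [cc, map_mul]

lemma cc_of (j : Fin m) : cc (FreeGroup.of j) = if j.val = 0 then 1 else 0 := by
  simp [cc, χ, FreeGroup.lift_apply_of]

lemma abs_cc_mk_le (w : FWord m) : |cc (FreeGroup.mk w)| ≤ (w.length : ℤ) := by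
  induction w with
  | nil =>
    have : FreeGroup.mk ([] : FWord m) = 1 := FreeGroup.one_eq_mk.symm
    simp [this, cc]
  | cons x w ih =>
    have hsplit : FreeGroup.mk (x :: w) = FreeGroup.mk [x] * FreeGroup.mk w := by
      rw [FreeGroup.mul_mk]; rfl
    have h1 : |cc (FreeGroup.mk [x])| ≤ 1 := by
      rcases x with ⟨a, b⟩
      cases b <;> simp [cc, χ, FreeGroup.lift_mk] <;> split <;> norm_num
    rw [hsplit, cc_mul]
    calc |cc (FreeGroup.mk [x]) + cc (FreeGroup.mk w)| ≤ _ := abs_add_le _ _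
      _ ≤ 1 + (w.length : ℤ) := add_le_add h1 ih
      _ = ((x :: w).length : ℤ) := by simp [add_comm]

lemma abs_cc_le_lenF (g : FreeGroup (Fin m)) : |cc g| ≤ (lenF g : ℤ) := by
  obtain ⟨w, hw, hl⟩ := lenF_spec g
  calc |cc g| = |cc (FreeGroup.mk w)| := by rw [hw]
    _ ≤ (w.length : ℤ) := abs_cc_mk_le w
    _ = (lenF g : ℤ) := by rw [hl]


lemma zpow_zero_apply (x : FreeGroup (Fin m)) : (φ ^ (0:ℤ)) x = x := rfl

lemma zpow_add_one_apply (r : ℤ) (x : FreeGroup (Fin m)) :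
    (φ ^ (r + 1)) x = (φ ^ r) (φ x) := by rw [zpow_add_one]; rfl

lemma zpow_sub_one_apply (r : ℤ) (x : FreeGroup (Fin m)) :
    (φ ^ (r - 1)) x = (φ ^ r) (φ⁻¹ x) := by rw [zpow_sub_one]; rfl



lemma phi_of_pos (hφ : IsHydraAut m φ) (j j' : Fin m) (h : j.val = j'.val + 1) :
    φ (FreeGroup.of j) = FreeGroup.of j * FreeGroup.of j' := by
  have e : (⟨j.val - 1, Nat.lt_of_le_of_lt (Nat.sub_le _ _) j.isLt⟩ : Fin m) = j' := by
    apply Fin.ext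
    show j.val - 1 = j'.val
    omega
  rw [hφ j, if_neg (by omega : ¬ j.val = 0), e]

lemma phi_inv_of (hφ : IsHydraAut m φ) (j j' : Fin m) (h : j.val = j'.val + 1) :
    φ⁻¹ (FreeGroup.of j) = FreeGroup.of j * (φ⁻¹ (FreeGroup.of j'))⁻¹ := by
  apply φ.injective
  rw [MulAut.apply_inv_self (M := FreeGroup (Fin m))]
  simp only [_root_.map_mul, _root_.map_inv, MulAut.apply_inv_self (M := FreeGroup (Fin m)),
    phi_of_pos φ hφ j j' h]
  rw [mul_inv_cancel_right]

lemma zpow_fix (hφ : IsHydraAut m φ) (j : Fin m) (hj : j.val = 0) (r : ℤ) :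
    (φ ^ r) (FreeGroup.of j) = FreeGroup.of j := by
  have h1 : φ (FreeGroup.of j) = FreeGroup.of j := by rw [hφ j, if_pos hj]
  have h2 : φ⁻¹ (FreeGroup.of j) = FreeGroup.of j := by
    apply φ.injective
    rw [MulAut.apply_inv_self (M := FreeGroup (Fin m)), h1]
  induction r using Int.induction_on with
  | zero => rfl
  | succ n ih => rw [zpow_add_one_apply, h1, ih]
  | pred n ih => rw [show (-(n:ℤ) - 1) = (-(n:ℤ)) - 1 from rfl, zpow_sub_one_apply, h2, ih]

lemma rec_up (hφ : IsHydraAut m φ) (j j' : Fin m) (h : j.val = j'.val + 1) (r : ℤ) :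
    (φ ^ (r + 1)) (FreeGroup.of j) =
      (φ ^ r) (FreeGroup.of j) * (φ ^ r) (FreeGroup.of j') := by
  rw [zpow_add_one_apply, phi_of_pos φ hφ j j' h]; simp only [_root_.map_mul]

lemma rec_down (hφ : IsHydraAut m φ) (j j' : Fin m) (h : j.val = j'.val + 1) (r : ℤ) :
    (φ ^ (r - 1)) (FreeGroup.of j) =
      (φ ^ r) (FreeGroup.of j) * ((φ ^ (r - 1)) (FreeGroup.of j'))⁻¹ := by
  rw [zpow_sub_one_apply, phi_inv_of φ hφ j j' h]
  simp only [_root_.map_mul, _root_.map_inv]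
  rw [← zpow_sub_one_apply]


lemma pascal (k : ℕ) (r : ℤ) :
    ∏ t ∈ Finset.range (k + 1), (r + 1 - t) =
      ∏ t ∈ Finset.range (k + 1), (r - t) + (k + 1) * ∏ t ∈ Finset.range k, (r - t) := by
  rw [Finset.prod_range_succ' (fun t : ℕ => r + 1 - t), Finset.prod_range_succ]
  have h0 : ∀ t ∈ Finset.range k, (r + 1 - ((t : ℕ) + 1 : ℕ) : ℤ) = r - t := by
    intro t _; push_cast; ring
  rw [Finset.prod_congr rfl h0]
  push_cast; ring

lemma prod_bound (k : ℕ) (r : ℤ) (hr : 2 * (k : ℤ) ≤ |r|) :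
    |r| ^ k ≤ 2 ^ k * |∏ t ∈ Finset.range k, (r - t)| := by
  calc |r| ^ k = ∏ _t ∈ Finset.range k, |r| := by
        rw [Finset.prod_const, Finset.card_range]
    _ ≤ ∏ t ∈ Finset.range k, (2 * |r - t|) := by
        apply Finset.prod_le_prod (fun t _ => abs_nonneg r)
        intro t ht
        have htk : (t : ℤ) < k := by exact_mod_cast Finset.mem_range.1 ht
        have ht0 : (0 : ℤ) ≤ t := Int.natCast_nonneg t
        rcases le_or_gt 0 r with h | h
        · rw [abs_of_nonneg h] at hr ⊢
          rw [abs_of_nonneg (by linarith : (0:ℤ) ≤ r - t)]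
          linarith
        · rw [abs_of_neg h] at hr ⊢
          rw [abs_of_neg (by linarith : (r - t : ℤ) < 0)]
          linarith
    _ = 2 ^ k * ∏ t ∈ Finset.range k, |r - t| := by
        rw [Finset.prod_mul_distrib, Finset.prod_const, Finset.card_range]
    _ = 2 ^ k * |∏ t ∈ Finset.range k, (r - t)| := by rw [Finset.abs_prod]




/-- Upper bound. -/
lemma len_upper (hφ : IsHydraAut m φ) :
    ∀ k : ℕ, ∀ j : Fin m, j.val = k → ∀ r : ℤ,
      (lenF ((φ ^ r) (FreeGroup.of j)) : ℤ) ≤ (|r| + 1) ^ k := by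
  intro k
  induction k with
  | zero =>
    intro j hj r
    rw [zpow_fix φ hφ j hj, pow_zero]
    exact_mod_cast lenF_of j
  | succ k ih =>
    intro j hj
    have hkm : k < m := by have := j.isLt; omega
    set j' : Fin m := ⟨k, hkm⟩ with hj'def
    have hrel : j.val = j'.val + 1 := by simp [hj'def, hj]
    intro r
    induction r using Int.induction_on with
    | zero =>
      rw [zpow_zero_apply]
      have h1 : (lenF (FreeGroup.of j) : ℤ) ≤ 1 := by exact_mod_cast lenF_of j
      have h2 : (1 : ℤ) ≤ (|(0:ℤ)| + 1) ^ (k+1) := by norm_num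
      linarith
    | succ n ihn =>
      have h1 := rec_up φ hφ j j' hrel (n : ℤ)
      have h2 : (lenF ((φ ^ ((n:ℤ)+1)) (FreeGroup.of j)) : ℤ)
          ≤ (lenF ((φ ^ (n:ℤ)) (FreeGroup.of j)) : ℤ)
            + (lenF ((φ ^ (n:ℤ)) (FreeGroup.of j')) : ℤ) := by
        rw [h1]; exact_mod_cast lenF_mul _ _
      have h3 := ih j' rfl (n : ℤ)
      have ha : (1 : ℤ) ≤ |(n:ℤ)| + 1 := by have := abs_nonneg (n:ℤ); linarith
      set a : ℤ := |(n:ℤ)| + 1 with hadef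
      have habs : |(n:ℤ) + 1| + 1 = a + 1 := by
        rw [abs_of_nonneg (by positivity), hadef, abs_of_nonneg (Int.natCast_nonneg n)]
      rw [habs]
      have hpow : a ^ k ≤ (a + 1) ^ k :=
        pow_le_pow_left₀ (by linarith) (by linarith) k
      have key : a ^ (k+1) + a ^ k ≤ (a + 1) ^ (k+1) := by
        calc a ^ (k+1) + a ^ k = (a + 1) * a ^ k := by ring
          _ ≤ (a + 1) * (a + 1) ^ k := by
              apply mul_le_mul_of_nonneg_left hpow (by linarith)
          _ = (a + 1) ^ (k+1) := by ring
      linarith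
    | pred n ihn =>
      have h1 := rec_down φ hφ j j' hrel (-(n:ℤ))
      rw [show (-(n:ℤ) - 1) = -(n:ℤ) - 1 from rfl] at h1
      have h2 : (lenF ((φ ^ (-(n:ℤ)-1)) (FreeGroup.of j)) : ℤ)
          ≤ (lenF ((φ ^ (-(n:ℤ))) (FreeGroup.of j)) : ℤ)
            + (lenF ((φ ^ (-(n:ℤ)-1)) (FreeGroup.of j')) : ℤ) := by
        rw [h1]
        have := lenF_mul ((φ ^ (-(n:ℤ))) (FreeGroup.of j))
          (((φ ^ (-(n:ℤ)-1)) (FreeGroup.of j'))⁻¹)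
        have h4 := lenF_inv ((φ ^ (-(n:ℤ)-1)) (FreeGroup.of j'))
        push_cast
        omega
      have h3 := ih j' rfl (-(n:ℤ)-1)
      have habs1 : |(-(n:ℤ))| = (n:ℤ) := by simp
      have habs2 : |(-(n:ℤ)-1)| = (n:ℤ)+1 := by
        rw [show (-(n:ℤ)-1) = -((n:ℤ)+1) by ring, abs_neg,
          abs_of_nonneg (by positivity)]
      rw [habs2]
      rw [habs1] at ihn
      rw [habs2] at h3
      set b : ℤ := (n:ℤ) + 1 with hbdef
      have hb : (1:ℤ) ≤ b := by have := Int.natCast_nonneg n; omega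
      have hpow : b ^ k ≤ (b + 1) ^ k := pow_le_pow_left₀ (by linarith) (by linarith) k
      have key : b ^ (k+1) + (b+1) ^ k ≤ (b + 1) ^ (k+1) := by
        have : b * b ^ k ≤ b * (b+1) ^ k :=
          mul_le_mul_of_nonneg_left hpow (by linarith)
        calc b ^ (k+1) + (b+1) ^ k = b * b ^ k + (b+1)^k := by ring
          _ ≤ b * (b+1) ^ k + (b+1)^k := by linarith
          _ = (b + 1) ^ (k+1) := by ring
      have hback : (-(n:ℤ)) - 1 = -(n:ℤ) - 1 := rfl
      linarith [h2, ihn, h3]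

/-- Exponent-sum formula : `k! · cc (φ^r aⱼ) = r(r-1)⋯(r-k+1)` for `j.val = k`. -/
lemma cc_formula (hφ : IsHydraAut m φ) :
    ∀ k : ℕ, ∀ j : Fin m, j.val = k → ∀ r : ℤ,
      (k.factorial : ℤ) * cc ((φ ^ r) (FreeGroup.of j)) =
        ∏ t ∈ Finset.range k, (r - t) := by
  intro k
  induction k with
  | zero =>
    intro j hj r
    rw [zpow_fix φ hφ j hj, cc_of, if_pos hj]
    simp
  | succ k ih =>
    intro j hj
    have hkm : k < m := by have := j.isLt; omega
    set j' : Fin m := ⟨k, hkm⟩ with hj'def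
    have hrel : j.val = j'.val + 1 := by simp [hj'def, hj]
    intro r
    induction r using Int.induction_on with
    | zero =>
      rw [zpow_zero_apply, cc_of, if_neg (by omega : ¬ j.val = 0), mul_zero]
      exact (Finset.prod_eq_zero (Finset.mem_range.2 (Nat.succ_pos k))
        (by norm_num)).symm
    | succ n ihn =>
      have h1 := rec_up φ hφ j j' hrel (n : ℤ)
      have h2 : cc ((φ ^ ((n:ℤ)+1)) (FreeGroup.of j))
          = cc ((φ ^ (n:ℤ)) (FreeGroup.of j)) + cc ((φ ^ (n:ℤ)) (FreeGroup.of j')) := by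
        rw [h1, cc_mul]
      have h3 := ih j' rfl (n : ℤ)
      have hp := pascal k (n : ℤ)
      have hfac : ((k+1).factorial : ℤ) = (k+1) * (k.factorial : ℤ) := by
        rw [Nat.factorial_succ]; push_cast; ring
      calc ((k+1).factorial : ℤ) * cc ((φ ^ ((n:ℤ)+1)) (FreeGroup.of j))
          = ((k+1).factorial : ℤ) * cc ((φ ^ (n:ℤ)) (FreeGroup.of j))
            + ((k:ℤ)+1) * ((k.factorial : ℤ) * cc ((φ ^ (n:ℤ)) (FreeGroup.of j'))) := by
            rw [h2, hfac]; push_cast; ring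
        _ = ∏ t ∈ Finset.range (k+1), ((n:ℤ) - t)
            + ((k:ℤ)+1) * ∏ t ∈ Finset.range k, ((n:ℤ) - t) := by
            rw [ihn, h3]
        _ = ∏ t ∈ Finset.range (k+1), ((n:ℤ) + 1 - t) := hp.symm
    | pred n ihn =>
      have h1 := rec_up φ hφ j j' hrel (-(n:ℤ)-1)
      rw [show (-(n:ℤ)-1) + 1 = -(n:ℤ) by ring] at h1
      have h2 : cc ((φ ^ (-(n:ℤ))) (FreeGroup.of j))
          = cc ((φ ^ (-(n:ℤ)-1)) (FreeGroup.of j))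
            + cc ((φ ^ (-(n:ℤ)-1)) (FreeGroup.of j')) := by
        rw [h1, cc_mul]
      have h3 := ih j' rfl (-(n:ℤ)-1)
      have hp := pascal k (-(n:ℤ)-1)
      rw [show (-(n:ℤ)-1) + 1 = -(n:ℤ) by ring] at hp
      have hfac : ((k+1).factorial : ℤ) = (k+1) * (k.factorial : ℤ) := by
        rw [Nat.factorial_succ]; push_cast; ring
      have expand : ((k+1).factorial : ℤ) * cc ((φ ^ (-(n:ℤ))) (FreeGroup.of j))
          = ((k+1).factorial : ℤ) * cc ((φ ^ (-(n:ℤ)-1)) (FreeGroup.of j))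
            + ((k:ℤ)+1) * ((k.factorial : ℤ) * cc ((φ ^ (-(n:ℤ)-1)) (FreeGroup.of j'))) := by
        rw [h2, hfac]; push_cast; ring
      rw [ihn, h3] at expand
      linarith [expand, hp]

end Hydra7

/-- Lemma 4.2: for `2 ≤ i ≤ m` there are constants `C_i, D_i > 0` with
`C_i |r|^{i-1} ≤ |φ^r(aᵢ)|_F ≤ D_i |r|^{i-1}` for all `r ≠ 0`. -/
theorem stmt_7 (m : ℕ) (hm : 2 ≤ m)
    (φ : FreeGroup (Fin m) ≃* FreeGroup (Fin m)) (hφ : IsHydraAut m φ)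
    (i : ℕ) (hi : 2 ≤ i) (him : i ≤ m) :
    ∃ C D : ℝ, 0 < C ∧ 0 < D ∧ ∀ r : ℤ, r ≠ 0 →
      C * |(r : ℝ)| ^ (i - 1) ≤
        (lenF ((φ ^ r) (FreeGroup.of (⟨i - 1, by omega⟩ : Fin m))) : ℝ) ∧
      (lenF ((φ ^ r) (FreeGroup.of (⟨i - 1, by omega⟩ : Fin m))) : ℝ) ≤
        D * |(r : ℝ)| ^ (i - 1) := by
  set k := i - 1 with hkdef
  have hk1 : 1 ≤ k := by omega
  have hkm : k < m := by omega
  set jj : Fin m := ⟨k, by omega⟩ with hjjdef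
  have hjval : jj.val = k := rfl
  have hfac1 : (1 : ℝ) ≤ (k.factorial : ℝ) := by
    exact_mod_cast Nat.one_le_iff_ne_zero.2 k.factorial_ne_zero
  have h2k : (2 : ℝ) ≤ 2 * k := by
    have : (1:ℝ) ≤ (k:ℝ) := by exact_mod_cast hk1
    linarith
  refine ⟨((2 * (k:ℝ)) ^ k * (k.factorial : ℝ))⁻¹, 2 ^ k, by positivity, by positivity, ?_⟩
  intro r hr
  set N : ℕ := lenF ((φ ^ r) (FreeGroup.of jj)) with hNdef
  have habs1 : (1 : ℤ) ≤ |r| := Int.one_le_abs hr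
  have habsR : ((|r| : ℤ) : ℝ) = |(r : ℝ)| := by push_cast; ring
  have hN1 : 1 ≤ N := by
    apply Hydra7.one_le_lenF
    intro h
    have h2 : FreeGroup.of jj = 1 := (φ ^ r).injective (by rw [h, _root_.map_one])
    exact FreeGroup.of_ne_one jj h2
  constructor
  · -- lower bound
    have hform := Hydra7.cc_formula φ hφ k jj hjval r
    rcases le_or_gt (2 * (k : ℤ)) |r| with hcase | hcase
    · have hQ := Hydra7.prod_bound k r hcase
      rw [← hform, abs_mul, abs_of_nonneg (by positivity : (0:ℤ) ≤ (k.factorial : ℤ))] at hQ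
      have hcc : |Hydra7.cc ((φ ^ r) (FreeGroup.of jj))| ≤ (N : ℤ) :=
        Hydra7.abs_cc_le_lenF _
      have hZ : |r| ^ k ≤ 2 ^ k * (k.factorial : ℤ) * N := by
        calc |r| ^ k ≤ 2 ^ k * ((k.factorial : ℤ) * |Hydra7.cc ((φ ^ r) (FreeGroup.of jj))|) := hQ
          _ ≤ 2 ^ k * ((k.factorial : ℤ) * N) := by
              apply mul_le_mul_of_nonneg_left _ (by positivity)
              exact mul_le_mul_of_nonneg_left hcc (by positivity)
          _ = 2 ^ k * (k.factorial : ℤ) * N := by ring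
      have hR : |(r:ℝ)| ^ k ≤ 2 ^ k * (k.factorial : ℝ) * N := by
        exact_mod_cast hZ
      have hmono : (2:ℝ) ^ k * (k.factorial : ℝ) * N ≤ (2*(k:ℝ)) ^ k * (k.factorial : ℝ) * N := by
        have hp : (2:ℝ) ^ k ≤ (2*(k:ℝ)) ^ k := pow_le_pow_left₀ (by norm_num) h2k k
        have : (0:ℝ) ≤ (k.factorial : ℝ) * N := by positivity
        nlinarith
      have hpos : (0:ℝ) < (2*(k:ℝ)) ^ k * (k.factorial : ℝ) := by positivity
      rw [inv_mul_le_iff₀ hpos]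
      calc |(r:ℝ)| ^ k ≤ 2 ^ k * (k.factorial : ℝ) * N := hR
        _ ≤ (2*(k:ℝ)) ^ k * (k.factorial : ℝ) * N := hmono
    · -- small |r|
      have hrle : |(r:ℝ)| ≤ 2 * (k:ℝ) := by
        rw [← habsR]
        exact_mod_cast le_of_lt (by exact_mod_cast hcase)
      have hpow : |(r:ℝ)| ^ k ≤ (2*(k:ℝ)) ^ k :=
        pow_le_pow_left₀ (abs_nonneg _) hrle k
      have hC : ((2 * (k:ℝ)) ^ k * (k.factorial : ℝ))⁻¹ * |(r:ℝ)| ^ k ≤ (k.factorial : ℝ)⁻¹ := by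
        rw [mul_inv]
        calc ((2*(k:ℝ))^k)⁻¹ * (k.factorial : ℝ)⁻¹ * |(r:ℝ)| ^ k
            ≤ ((2*(k:ℝ))^k)⁻¹ * (k.factorial : ℝ)⁻¹ * (2*(k:ℝ))^k := by
              apply mul_le_mul_of_nonneg_left hpow (by positivity)
          _ = (k.factorial : ℝ)⁻¹ := by
              field_simp
        -- done
      have : (k.factorial : ℝ)⁻¹ ≤ 1 := by
        rw [inv_le_one_iff₀]; right; exact hfac1
      have hN1R : (1:ℝ) ≤ N := by exact_mod_cast hN1
      linarith
  · -- upper bound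
    have hup := Hydra7.len_upper φ hφ k jj hjval r
    have hZ : (N : ℤ) ≤ 2 ^ k * |r| ^ k := by
      calc (N : ℤ) ≤ (|r| + 1) ^ k := hup
        _ ≤ (2 * |r|) ^ k := pow_le_pow_left₀ (by positivity) (by linarith) k
        _ = 2 ^ k * |r| ^ k := by rw [mul_pow]
    have hR : (N : ℝ) ≤ 2 ^ k * |(r:ℝ)| ^ k := by exact_mod_cast hZ
    linarith
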